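/- For a strictly positive moment sequence, the determinant inequality Δ_{1,n} Δ_{−1,n+1} − Δ_{1,n+1} Δ_{−1,n} ≠ 0 holds for all n ≥ 0; more precisely Δ_{1,n+1} Δ_{−1,n} − Δ_{1,n} Δ_{−1,n+1} = Δ_{0,n}². -/

import Mathlib

open Matrix

def sigEquiv (n : ℕ) : (Fin 2 ⊕ Fin n) ≃ Fin (n + 2) where
  toFun x := Sum.elim (fun a : Fin 2 => if a = 0 then 0 else Fin.last (n + 1))
    (fun k : Fin n => ⟨k.1 + 1, by omega⟩) x
  invFun m := if h : m.1 = 0 then Sum.inl 0 else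
    if h2 : m.1 = n + 1 then Sum.inl 1 else Sum.inr ⟨m.1 - 1, by omega⟩
  left_inv := by
    rintro (a | k)
    · fin_cases a <;> simp [Fin.last]
    · have h1 : k.1 + 1 ≠ 0 := by omega
      have h2 : k.1 + 1 ≠ n + 1 := by omega
      simp [h1, h2, show k.1 ≠ n by omega]
  right_inv := by
    intro m
    by_cases h : m.1 = 0
    · apply Fin.ext; simp [h]
    · by_cases h2 : m.1 = n + 1
      · apply Fin.ext; simp [h, h2, Fin.last]
      · have hm : m.1 - 1 + 1 = m.1 := by omega
        apply Fin.ext; simp [h, h2, hm]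

lemma sig_inl0 (n : ℕ) : sigEquiv n (Sum.inl 0) = 0 := rfl
lemma sig_inl1 (n : ℕ) : sigEquiv n (Sum.inl 1) = Fin.last (n + 1) := rfl
lemma sig_inr (n : ℕ) (k : Fin n) : sigEquiv n (Sum.inr k) = ⟨k.1 + 1, by omega⟩ := rfl

def midFin (n : ℕ) : Fin n → Fin (n + 2) := fun k => ⟨k.1 + 1, by omega⟩

lemma last_ne_zero' (n : ℕ) : (Fin.last (n + 1) : Fin (n + 2)) ≠ 0 := by
  simp [Fin.ext_iff]

lemma mid_ne_zero (n : ℕ) (k : Fin n) : midFin n k ≠ 0 := by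
  simp [midFin, Fin.ext_iff]

lemma mid_ne_last (n : ℕ) (k : Fin n) : midFin n k ≠ Fin.last (n + 1) := by
  simp [midFin, Fin.ext_iff]; omega

/-- Desnanot–Jacobi identity, multiplied through by `det M` (valid over any comm ring). -/
theorem desnanot_mul {R : Type*} [CommRing R] (n : ℕ)
    (M : Matrix (Fin (n + 2)) (Fin (n + 2)) R) :
    M.det * (M.det * (M.submatrix (midFin n) (midFin n)).det) =
      M.det * ((M.submatrix Fin.succ Fin.succ).det *
          (M.submatrix Fin.castSucc Fin.castSucc).det -
        (M.submatrix Fin.succ Fin.castSucc).det *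
          (M.submatrix Fin.castSucc Fin.succ).det) := by
  classical
  set P : Matrix (Fin (n + 2)) (Fin (n + 2)) R := Matrix.of fun i j =>
    if j = 0 then adjugate M i 0 else if j = Fin.last (n + 1) then adjugate M i (Fin.last (n + 1))
    else if i = j then 1 else 0 with hP
  set N : Matrix (Fin (n + 2)) (Fin (n + 2)) R := Matrix.of fun i j =>
    if j = 0 then M.det • (1 : Matrix (Fin (n+2)) (Fin (n+2)) R) i 0
    else if j = Fin.last (n + 1) then
      M.det • (1 : Matrix (Fin (n+2)) (Fin (n+2)) R) i (Fin.last (n + 1))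
    else M i j with hN
  have hMP : M * P = N := by
    ext i j
    rw [Matrix.mul_apply]
    by_cases hj0 : j = 0
    · subst hj0
      simp only [hP, hN, Matrix.of_apply, eq_self_iff_true, if_true]
      rw [show (∑ k, M i k * adjugate M k 0) = (M * adjugate M) i 0 from
        (Matrix.mul_apply).symm, Matrix.mul_adjugate]
      rfl
    · by_cases hjl : j = Fin.last (n + 1)
      · subst hjl
        simp only [hP, hN, Matrix.of_apply, if_neg (last_ne_zero' n), eq_self_iff_true, if_true]
        rw [show (∑ k, M i k * adjugate M k (Fin.last (n+1))) = (M * adjugate M) i (Fin.last (n+1))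
          from (Matrix.mul_apply).symm, Matrix.mul_adjugate]
        rfl
      · simp only [hP, hN, Matrix.of_apply, if_neg hj0, if_neg hjl, mul_ite, mul_one, mul_zero]
        simp [Finset.sum_ite_eq']
  set A : Matrix (Fin 2) (Fin 2) R :=
    !![adjugate M 0 0, adjugate M 0 (Fin.last (n+1));
       adjugate M (Fin.last (n+1)) 0, adjugate M (Fin.last (n+1)) (Fin.last (n+1))] with hA
  set C : Matrix (Fin n) (Fin 2) R :=
    Matrix.of (fun k b => adjugate M (midFin n k) (if b = 0 then 0 else Fin.last (n+1))) with hC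
  have hPσ : P.submatrix (sigEquiv n) (sigEquiv n) = fromBlocks A 0 C 1 := by
    ext i j
    rcases i with a | k <;> rcases j with b | k'
    · fin_cases a <;> fin_cases b <;>
        simp [hP, hA, sig_inl0, sig_inl1, last_ne_zero' n, fromBlocks]
    · have h1 := mid_ne_zero n k'
      have h2 := mid_ne_last n k'
      have h3 : (0 : Fin (n + 2)) ≠ midFin n k' := (mid_ne_zero n k').symm
      have h4 : (Fin.last (n+1) : Fin (n + 2)) ≠ midFin n k' := (mid_ne_last n k').symm
      fin_cases a <;>
        simp [hP, sig_inl0, sig_inl1, sig_inr, show sigEquiv n (Sum.inr k') = midFin n k' from rfl,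
          h1, h2, h3, h4, fromBlocks]
    · fin_cases b <;>
        simp [hP, hC, sig_inl0, sig_inl1, show sigEquiv n (Sum.inr k) = midFin n k from rfl,
          last_ne_zero' n, fromBlocks]
    · have h1 := mid_ne_zero n k'
      have h2 := mid_ne_last n k'
      have h5 : (midFin n k = midFin n k') ↔ k = k' := by
        constructor
        · intro h; ext
          have := congrArg Fin.val h
          simpa [midFin] using this
        · intro h; rw [h]
      simp [hP, show ∀ m, sigEquiv n (Sum.inr m) = midFin n m from fun _ => rfl,
        h1, h2, h5, fromBlocks, Matrix.one_apply]
  set X : Matrix (Fin 2) (Fin n) R :=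
    Matrix.of (fun a k => M (sigEquiv n (Sum.inl a)) (midFin n k)) with hX
  set Z : Matrix (Fin n) (Fin n) R := M.submatrix (midFin n) (midFin n) with hZ
  have hNσ : N.submatrix (sigEquiv n) (sigEquiv n) = fromBlocks (M.det • 1) X 0 Z := by
    ext i j
    rcases i with a | k <;> rcases j with b | k'
    · fin_cases a <;> fin_cases b <;>
        simp [hN, sig_inl0, sig_inl1, last_ne_zero' n, (last_ne_zero' n).symm,
          fromBlocks, Matrix.one_apply]
    · have h1 := mid_ne_zero n k'
      have h2 := mid_ne_last n k'
      fin_cases a <;>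
        simp [hN, hX, sig_inl0, sig_inl1, show sigEquiv n (Sum.inr k') = midFin n k' from rfl,
          h1, h2, fromBlocks]
    · have h1 := mid_ne_zero n k
      have h2 := mid_ne_last n k
      have h3 : (0 : Fin (n + 2)) ≠ midFin n k := (mid_ne_zero n k).symm
      have h4 : (Fin.last (n+1) : Fin (n + 2)) ≠ midFin n k := (mid_ne_last n k).symm
      fin_cases b <;>
        simp [hN, sig_inl0, sig_inl1, show sigEquiv n (Sum.inr k) = midFin n k from rfl,
          h1, h2, h3, h4, last_ne_zero' n, fromBlocks, Matrix.one_apply]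
    · have h1 := mid_ne_zero n k'
      have h2 := mid_ne_last n k'
      simp [hN, hZ, show ∀ m, sigEquiv n (Sum.inr m) = midFin n m from fun _ => rfl,
        h1, h2, fromBlocks]
  have hdetP : P.det = A.det := by
    rw [← Matrix.det_submatrix_equiv_self (sigEquiv n) P, hPσ, Matrix.det_fromBlocks_zero₁₂,
      Matrix.det_one, mul_one]
  have hdetN : N.det = M.det ^ 2 * Z.det := by
    rw [← Matrix.det_submatrix_equiv_self (sigEquiv n) N, hNσ, Matrix.det_fromBlocks_zero₂₁,
      Matrix.det_smul, Matrix.det_one, mul_one]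
    norm_num
  have hchain : M.det * A.det = M.det ^ 2 * Z.det := by
    rw [← hdetP, ← hdetN, ← hMP, Matrix.det_mul]
  have e00 : adjugate M 0 0 = (M.submatrix Fin.succ Fin.succ).det := by
    rw [Matrix.adjugate_fin_succ_eq_det_submatrix]
    simp [Fin.succAbove_zero]
  have ell : adjugate M (Fin.last (n+1)) (Fin.last (n+1)) =
      (M.submatrix Fin.castSucc Fin.castSucc).det := by
    rw [Matrix.adjugate_fin_succ_eq_det_submatrix, Fin.succAbove_last]
    rw [show ((Fin.last (n+1) : Fin (n+2)) + Fin.last (n+1) : ℕ) = (n+1) + (n+1) from rfl]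
    rw [Even.neg_one_pow ⟨n + 1, rfl⟩, one_mul]
  have e0l : adjugate M 0 (Fin.last (n+1)) = (-1 : R) ^ (n + 1) *
      (M.submatrix Fin.castSucc Fin.succ).det := by
    rw [Matrix.adjugate_fin_succ_eq_det_submatrix, Fin.succAbove_last, Fin.succAbove_zero]
    norm_num
  have el0 : adjugate M (Fin.last (n+1)) 0 = (-1 : R) ^ (n + 1) *
      (M.submatrix Fin.succ Fin.castSucc).det := by
    rw [Matrix.adjugate_fin_succ_eq_det_submatrix, Fin.succAbove_last, Fin.succAbove_zero]
    norm_num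
  have hsq : ((-1 : R) ^ (n + 1)) * ((-1 : R) ^ (n + 1)) = 1 := by
    rw [← pow_add]; exact Even.neg_one_pow ⟨n + 1, rfl⟩
  have hdetA : A.det = (M.submatrix Fin.succ Fin.succ).det *
      (M.submatrix Fin.castSucc Fin.castSucc).det -
      (M.submatrix Fin.succ Fin.castSucc).det * (M.submatrix Fin.castSucc Fin.succ).det := by
    rw [hA, Matrix.det_fin_two_of, e00, ell, e0l, el0]
    linear_combination (-(((M.submatrix Fin.castSucc Fin.succ).det) *
      ((M.submatrix Fin.succ Fin.castSucc).det))) * hsq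
  rw [← hdetA, hZ]
  linear_combination -hchain

/-- Desnanot–Jacobi identity over ℝ. -/
theorem desnanot (n : ℕ) (M : Matrix (Fin (n + 2)) (Fin (n + 2)) ℝ) :
    M.det * (M.submatrix (midFin n) (midFin n)).det =
      (M.submatrix Fin.succ Fin.succ).det * (M.submatrix Fin.castSucc Fin.castSucc).det -
        (M.submatrix Fin.succ Fin.castSucc).det * (M.submatrix Fin.castSucc Fin.succ).det := by
  classical
  set R := MvPolynomial (Fin (n + 2) × Fin (n + 2)) ℝ
  set G : Matrix (Fin (n + 2)) (Fin (n + 2)) R :=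
    Matrix.of fun i j => MvPolynomial.X (i, j) with hG
  have hGdet : G.det ≠ 0 := by
    intro h
    have h2 := congrArg (MvPolynomial.aeval
      (fun p : Fin (n + 2) × Fin (n + 2) => if p.1 = p.2 then (1 : ℝ) else 0)) h
    rw [map_zero, ← RingHom.coe_coe, RingHom.map_det] at h2
    have hid : G.map ((MvPolynomial.aeval
        (fun p : Fin (n + 2) × Fin (n + 2) => if p.1 = p.2 then (1 : ℝ) else 0) :
          R →ₐ[ℝ] ℝ) : R →+* ℝ) = (1 : Matrix (Fin (n + 2)) (Fin (n + 2)) ℝ) := by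
      ext i j
      rw [hG]
      simp only [Matrix.map_apply, Matrix.of_apply, Matrix.one_apply]
      rw [RingHom.coe_coe, MvPolynomial.aeval_X]
    rw [RingHom.mapMatrix_apply, hid, Matrix.det_one] at h2
    exact one_ne_zero h2
  have key := desnanot_mul n G
  have key2 := mul_left_cancel₀ hGdet key
  -- specialize to M
  set ψ : R →+* ℝ := (MvPolynomial.aeval (fun p : Fin (n + 2) × Fin (n + 2) => M p.1 p.2) :
    R →ₐ[ℝ] ℝ).toRingHom with hψ
  have hmap : G.map ψ = M := by
    ext i j
    simp only [hG, hψ, Matrix.map_apply, Matrix.of_apply, AlgHom.toRingHom_eq_coe]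
    rw [RingHom.coe_coe, MvPolynomial.aeval_X]
  have h3 := congrArg ψ key2
  rw [map_sub, _root_.map_mul, _root_.map_mul, _root_.map_mul, RingHom.map_det, RingHom.map_det, RingHom.map_det,
    RingHom.map_det, RingHom.map_det, RingHom.map_det] at h3
  simpa only [RingHom.mapMatrix_apply, show ∀ (m : ℕ) (f g : Fin m → Fin (n+2)),
      (G.submatrix f g).map ψ = (G.map ψ).submatrix f g from fun _ _ _ => rfl, hmap] using h3

noncomputable section

/-- The Hankel determinant `Δ_{0,n} = det (s_{i+j})_{0 ≤ i,j ≤ n}`. -/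
def hankel (s : ℕ → ℝ) (n : ℕ) : ℝ :=
  (Matrix.of fun i j : Fin (n + 1) => s (i.1 + j.1)).det

/-- `Δ_{1,n} = det (s_{1+i+j})_{0 ≤ i,j ≤ n−1}` (with `Δ_{1,0} = 1`). -/
def hankel1 (s : ℕ → ℝ) (n : ℕ) : ℝ :=
  (Matrix.of fun i j : Fin n => s (1 + i.1 + j.1)).det

/-- `Δ_{−1,n}`: the `(n+1)×(n+1)` determinant with first row `(0, s_0, …, s_{n−1})`
and subsequent rows `(s_{i−1}, s_i, …, s_{i+n−1})` (so `Δ_{−1,0} = 0`). -/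
def hankelm1 (s : ℕ → ℝ) (n : ℕ) : ℝ :=
  (Matrix.of fun i j : Fin (n + 1) =>
    if i.1 + j.1 = 0 then (0 : ℝ) else s (i.1 + j.1 - 1)).det

/-- For a strictly positive moment sequence,
`Δ_{1,n+1} Δ_{−1,n} − Δ_{1,n} Δ_{−1,n+1} = Δ_{0,n}²`; in particular
`Δ_{1,n} Δ_{−1,n+1} − Δ_{1,n+1} Δ_{−1,n} ≠ 0` for all `n ≥ 0`. -/
theorem hankel_determinant_identity (s : ℕ → ℝ) (h0 : ∀ n, 0 < hankel s n) :
    ∀ n : ℕ,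
      hankel1 s (n + 1) * hankelm1 s n - hankel1 s n * hankelm1 s (n + 1)
        = (hankel s n) ^ 2 ∧
      hankel1 s n * hankelm1 s (n + 1) - hankel1 s (n + 1) * hankelm1 s n ≠ 0 := by
  intro n
  set M : Matrix (Fin (n + 2)) (Fin (n + 2)) ℝ := Matrix.of fun i j =>
    if i.1 + j.1 = 0 then (0 : ℝ) else s (i.1 + j.1 - 1) with hM
  have hdj := desnanot n M
  have h1 : M.det = hankelm1 s (n + 1) := rfl
  have h2 : (M.submatrix (midFin n) (midFin n)).det = hankel1 s n := by
    unfold hankel1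
    congr 1
    ext i j
    simp only [hM, Matrix.submatrix_apply, Matrix.of_apply, midFin]
    rw [if_neg (by omega)]
    congr 1 <;> omega
  have h3 : (M.submatrix Fin.succ Fin.succ).det = hankel1 s (n + 1) := by
    unfold hankel1
    congr 1
    ext i j
    simp only [hM, Matrix.submatrix_apply, Matrix.of_apply, Fin.val_succ]
    rw [if_neg (by omega)]
    congr 1 <;> omega
  have h4 : (M.submatrix Fin.castSucc Fin.castSucc).det = hankelm1 s n := by
    unfold hankelm1
    congr 1
  have h5 : (M.submatrix Fin.succ Fin.castSucc).det = hankel s n := by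
    unfold hankel
    have hE : M.submatrix Fin.succ Fin.castSucc
        = Matrix.of fun i j : Fin (n + 1) => s (i.1 + j.1) := by
      ext i j
      simp only [hM, Matrix.submatrix_apply, Matrix.of_apply, Fin.val_succ, Fin.coe_castSucc]
      rw [if_neg (by omega)]
      exact congrArg s (by omega)
    rw [hE]
  have h6 : (M.submatrix Fin.castSucc Fin.succ).det = hankel s n := by
    unfold hankel
    have hE : M.submatrix Fin.castSucc Fin.succ
        = Matrix.of fun i j : Fin (n + 1) => s (i.1 + j.1) := by
      ext i j
      simp only [hM, Matrix.submatrix_apply, Matrix.of_apply, Fin.val_succ, Fin.coe_castSucc]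
      rw [if_neg (by omega)]
      exact congrArg s (by omega)
    rw [hE]
  rw [h1, h2, h3, h4, h5, h6] at hdj
  have heq : hankel1 s (n + 1) * hankelm1 s n - hankel1 s n * hankelm1 s (n + 1)
      = (hankel s n) ^ 2 := by linear_combination -hdj
  refine ⟨heq, fun hc => ?_⟩
  have hz : (hankel s n) ^ 2 = 0 := by linarith
  exact (pow_pos (h0 n) 2).ne' hz
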